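/- Let S_0 = 0, S_1, ..., S_N be a one-dimensional random walk with i.i.d. increments taking values in a finite symmetric set, conditioned on S_N = 0. Let Z_i be the event that the walk attains its minimum value exactly i times among the indices 1, ..., N. Then P({S_j >= 0 for all 1 <= j <= N} ∩ Z_i | S_N = 0) <= i/N for each i >= 1. -/

import Mathlib

open Finset

namespace CyclicAux

variable {N : ℕ}

noncomputable def psum (N : ℕ) (x : Fin N → ℝ) (j : ℕ) : ℝ :=
  ∑ i ∈ Finset.univ.filter (fun i : Fin N => (i : ℕ) < j), x i

noncomputable def vsum (hN : 0 < N) (x : Fin N → ℝ) (n : ℕ) : ℝ :=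
  ∑ m ∈ Finset.range n, x ⟨m % N, Nat.mod_lt m hN⟩

def shift (k : Fin N) (x : Fin N → ℝ) : Fin N → ℝ := fun a => x (a + k)

lemma vsum_succ (hN : 0 < N) (x : Fin N → ℝ) (n : ℕ) :
    vsum hN x (n + 1) = vsum hN x n + x ⟨n % N, Nat.mod_lt n hN⟩ :=
  Finset.sum_range_succ _ _

lemma psum_eq_vsum (hN : 0 < N) (x : Fin N → ℝ) {j : ℕ} (hj : j ≤ N) :
    psum N x j = vsum hN x j := by
  unfold psum vsum
  refine Finset.sum_bij' (fun (a : Fin N) _ => (a : ℕ)) (fun m hm => ⟨m % N, Nat.mod_lt m hN⟩)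
    ?_ ?_ ?_ ?_ ?_
  · intro a ha
    simp only [Finset.mem_filter, Finset.mem_univ, true_and] at ha
    simp [ha]
  · intro m hm
    simp only [Finset.mem_range] at hm
    simp [Nat.mod_eq_of_lt (lt_of_lt_of_le hm hj), hm]
  · intro a ha
    ext
    simp [Nat.mod_eq_of_lt a.isLt]
  · intro m hm
    simp only [Finset.mem_range] at hm
    simp [Nat.mod_eq_of_lt (lt_of_lt_of_le hm hj)]
  · intro a ha
    congr 1
    ext
    simp [Nat.mod_eq_of_lt a.isLt]

end CyclicAux

namespace CyclicAux

variable {N : ℕ}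

lemma vsum_add_N (hN : 0 < N) (x : Fin N → ℝ) (h0 : vsum hN x N = 0) (n : ℕ) :
    vsum hN x (n + N) = vsum hN x n := by
  induction n with
  | zero => simpa [vsum] using h0
  | succ n ih =>
      have : n + 1 + N = (n + N) + 1 := by omega
      rw [this, vsum_succ, ih, vsum_succ]
      congr 2
      exact Fin.ext (by simp)

lemma vsum_add_mul (hN : 0 < N) (x : Fin N → ℝ) (h0 : vsum hN x N = 0) (r q : ℕ) :
    vsum hN x (r + q * N) = vsum hN x r := by
  induction q with
  | zero => simp
  | succ q ih =>
      have : r + (q + 1) * N = (r + q * N) + N := by ring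
      rw [this, vsum_add_N hN x h0, ih]

lemma vsum_mod (hN : 0 < N) (x : Fin N → ℝ) (h0 : vsum hN x N = 0) (n : ℕ) :
    vsum hN x n = vsum hN x (n % N) := by
  conv_lhs => rw [← Nat.mod_add_div n N, Nat.mul_comm]
  exact vsum_add_mul hN x h0 _ _

lemma vsum_mod_succ (hN : 0 < N) (x : Fin N → ℝ) (h0 : vsum hN x N = 0) (n : ℕ) :
    vsum hN x (n % N + 1) = vsum hN x (n + 1) := by
  conv_rhs => rw [← Nat.mod_add_div n N]
  have : n % N + N * (n / N) + 1 = (n % N + 1) + (n / N) * N := by ring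
  rw [this, vsum_add_mul hN x h0]

lemma shift_vsum (hN : 0 < N) (x : Fin N → ℝ) (k : Fin N) (j : ℕ) :
    vsum hN (shift k x) j = vsum hN x (k.val + j) - vsum hN x k.val := by
  induction j with
  | zero => simp [vsum]
  | succ j ih =>
      rw [vsum_succ, ih]
      have : k.val + (j + 1) = (k.val + j) + 1 := by omega
      rw [this, vsum_succ]
      have hx : shift k x ⟨j % N, Nat.mod_lt j hN⟩
          = x ⟨(k.val + j) % N, Nat.mod_lt _ hN⟩ := by
        unfold shift
        congr 1
        ext
        simp [Fin.add_def, Nat.mod_add_mod, Nat.add_comm]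
      rw [hx]
      ring

end CyclicAux

namespace CyclicAux

variable {N : ℕ}

noncomputable def gfun (hN : 0 < N) (x : Fin N → ℝ) : Fin N → ℝ :=
  fun a => vsum hN x (a.val + 1)

noncomputable def Mval (hN : 0 < N) (x : Fin N → ℝ) : ℝ :=
  haveI : Nonempty (Fin N) := ⟨⟨0, hN⟩⟩
  Finset.univ.inf' Finset.univ_nonempty (gfun hN x)

lemma gfun_of_mod (hN : 0 < N) (x : Fin N → ℝ) (h0 : vsum hN x N = 0)
    (c : Fin N) (n : ℕ) (h : c.val = n % N) :
    gfun hN x c = vsum hN x (n + 1) := by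
  unfold gfun
  rw [h, vsum_mod_succ hN x h0]

lemma val_add_one [NeZero N] (b : Fin N) : (b + 1).val = (b.val + 1) % N := by
  rw [Fin.add_def, Fin.val_one']
  conv_rhs => rw [Nat.add_mod]
  rw [Nat.mod_eq_of_lt b.isLt]

lemma gfun_add (hN : 0 < N) (x : Fin N → ℝ) (h0 : vsum hN x N = 0) (a k : Fin N) :
    gfun hN x (a + k) = vsum hN x (k.val + (a.val + 1)) := by
  rw [gfun_of_mod hN x h0 (a + k) (a.val + k.val) (by rw [Fin.add_def])]
  congr 1
  omega

lemma vsum_succ_fin (hN : 0 < N) [NeZero N] (x : Fin N → ℝ) (h0 : vsum hN x N = 0) (b : Fin N) :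
    vsum hN x ((b + 1 : Fin N)).val = gfun hN x b := by
  rw [val_add_one b, ← vsum_mod hN x h0]
  rfl

lemma vsum_val_eq_gfun_sub (hN : 0 < N) [NeZero N] (x : Fin N → ℝ) (h0 : vsum hN x N = 0) (k : Fin N) :
    vsum hN x k.val = gfun hN x (k - 1) := by
  have := vsum_succ_fin hN x h0 (k - 1)
  rwa [sub_add_cancel] at this

lemma Mval_le_vsum (hN : 0 < N) (x : Fin N → ℝ) (h0 : vsum hN x N = 0) (k : Fin N) :
    Mval hN x ≤ vsum hN x k.val := by
  haveI : NeZero N := ⟨hN.ne'⟩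
  rw [vsum_val_eq_gfun_sub hN x h0 k]
  exact Finset.inf'_le _ (Finset.mem_univ _)

lemma gfun_shift (hN : 0 < N) (x : Fin N → ℝ) (h0 : vsum hN x N = 0) (k a : Fin N) :
    gfun hN (shift k x) a = gfun hN x (a + k) - vsum hN x k.val := by
  rw [gfun_add hN x h0]
  exact shift_vsum hN x k (a.val + 1)

end CyclicAux

namespace CyclicAux

variable {N : ℕ}

lemma shift_vsum_N (hN : 0 < N) (x : Fin N → ℝ) (h0 : vsum hN x N = 0) (k : Fin N) :
    vsum hN (shift k x) N = 0 := by
  rw [shift_vsum hN x k N, vsum_add_N hN x h0, sub_self]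

lemma Mval_shift (hN : 0 < N) [NeZero N] (x : Fin N → ℝ) (h0 : vsum hN x N = 0) (k : Fin N) :
    Mval hN (shift k x) = Mval hN x - vsum hN x k.val := by
  haveI : Nonempty (Fin N) := ⟨⟨0, hN⟩⟩
  refine le_antisymm ?_ ?_
  · obtain ⟨b, -, hb⟩ := Finset.exists_mem_eq_inf' (Finset.univ_nonempty (α := Fin N)) (gfun hN x)
    have : Mval hN (shift k x) ≤ gfun hN (shift k x) (b - k) :=
      Finset.inf'_le _ (Finset.mem_univ _)
    rw [gfun_shift hN x h0, sub_add_cancel] at this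
    calc Mval hN (shift k x) ≤ gfun hN x b - vsum hN x k.val := this
    _ = Mval hN x - vsum hN x k.val := by rw [← hb]; rfl
  · refine Finset.le_inf' _ _ fun a _ => ?_
    rw [gfun_shift hN x h0]
    have : Mval hN x ≤ gfun hN x (a + k) := Finset.inf'_le _ (Finset.mem_univ _)
    linarith

lemma card_shift (hN : 0 < N) [NeZero N] (x : Fin N → ℝ) (h0 : vsum hN x N = 0) (k : Fin N) :
    (Finset.univ.filter fun a => gfun hN (shift k x) a = Mval hN (shift k x)).card
      = (Finset.univ.filter fun b => gfun hN x b = Mval hN x).card := by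
  refine Finset.card_bij' (fun a _ => a + k) (fun b _ => b - k) ?_ ?_ ?_ ?_
  · intro a ha
    simp only [Finset.mem_filter, Finset.mem_univ, true_and] at ha ⊢
    rw [gfun_shift hN x h0, Mval_shift hN x h0, sub_left_inj] at ha
    exact ha
  · intro b hb
    simp only [Finset.mem_filter, Finset.mem_univ, true_and] at hb ⊢
    rw [gfun_shift hN x h0, Mval_shift hN x h0, sub_left_inj, sub_add_cancel]
    exact hb
  · intro a _; exact add_sub_cancel_right a k
  · intro b _; exact sub_add_cancel b k

lemma nonneg_shift_iff (hN : 0 < N) [NeZero N] (x : Fin N → ℝ) (h0 : vsum hN x N = 0)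
    (k : Fin N) :
    (∀ a, 0 ≤ gfun hN (shift k x) a) ↔ vsum hN x k.val = Mval hN x := by
  haveI : Nonempty (Fin N) := ⟨⟨0, hN⟩⟩
  constructor
  · intro h
    refine le_antisymm ?_ (Mval_le_vsum hN x h0 k)
    refine Finset.le_inf' _ _ fun b _ => ?_
    have := h (b - k)
    rw [gfun_shift hN x h0, sub_add_cancel] at this
    linarith
  · intro h a
    rw [gfun_shift hN x h0, h]
    have : Mval hN x ≤ gfun hN x (a + k) := Finset.inf'_le _ (Finset.mem_univ _)
    linarith

lemma card_vsum (hN : 0 < N) [NeZero N] (x : Fin N → ℝ) (h0 : vsum hN x N = 0) :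
    (Finset.univ.filter fun k : Fin N => vsum hN x k.val = Mval hN x).card
      = (Finset.univ.filter fun b => gfun hN x b = Mval hN x).card := by
  refine Finset.card_bij' (fun k _ => k - 1) (fun b _ => b + 1) ?_ ?_ ?_ ?_
  · intro k hk
    simp only [Finset.mem_filter, Finset.mem_univ, true_and] at hk ⊢
    rw [← vsum_val_eq_gfun_sub hN x h0]
    exact hk
  · intro b hb
    simp only [Finset.mem_filter, Finset.mem_univ, true_and] at hb ⊢
    rw [vsum_succ_fin hN x h0]
    exact hb
  · intro k _; exact sub_add_cancel k 1
  · intro b _; exact add_sub_cancel_right b 1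

lemma count_main (hN : 0 < N) (x : Fin N → ℝ) (h0 : vsum hN x N = 0) (i : ℕ) :
    (Finset.univ.filter fun k : Fin N =>
        (∀ a, 0 ≤ gfun hN (shift k x) a) ∧
        (Finset.univ.filter fun a => gfun hN (shift k x) a = Mval hN (shift k x)).card = i).card
      ≤ i := by
  haveI : NeZero N := ⟨hN.ne'⟩
  by_cases hm : (Finset.univ.filter fun b => gfun hN x b = Mval hN x).card = i
  · calc (Finset.univ.filter fun k : Fin N =>
        (∀ a, 0 ≤ gfun hN (shift k x) a) ∧
        (Finset.univ.filter fun a => gfun hN (shift k x) a = Mval hN (shift k x)).card = i).card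
        ≤ (Finset.univ.filter fun k : Fin N => vsum hN x k.val = Mval hN x).card := by
          refine Finset.card_le_card fun k hk => ?_
          simp only [Finset.mem_filter, Finset.mem_univ, true_and] at hk ⊢
          exact (nonneg_shift_iff hN x h0 k).mp hk.1
    _ = i := by rw [card_vsum hN x h0]; exact hm
  · convert Nat.zero_le i
    rw [Finset.card_eq_zero, Finset.filter_eq_empty_iff]
    intro k _
    rw [card_shift hN x h0 k]
    intro hcon
    exact hm hcon.2

end CyclicAux

namespace CyclicAux

variable {N : ℕ}

lemma total_shift (hN : 0 < N) (x : Fin N → ℝ) (k : Fin N) :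
    psum N (shift k x) N = psum N x N := by
  haveI : NeZero N := ⟨hN.ne'⟩
  unfold psum
  rw [Finset.filter_true_of_mem (fun a _ => a.isLt)]
  exact Fintype.sum_equiv (Equiv.addRight k) _ _ (fun a => rfl)

lemma forall_Icc_iff (hN : 0 < N) (p : ℕ → Prop) :
    (∀ j ∈ Finset.Icc 1 N, p j) ↔ ∀ a : Fin N, p (a.val + 1) := by
  constructor
  · intro h a
    exact h _ (Finset.mem_Icc.mpr ⟨by omega, by have := a.isLt; omega⟩)
  · intro h j hj
    have hj' := Finset.mem_Icc.mp hj
    have he : j = (⟨j - 1, by omega⟩ : Fin N).val + 1 := by simp; omega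
    rw [he]; exact h _

lemma inf_Icc_eq (hN : 0 < N) (f : ℕ → ℝ) :
    haveI : Nonempty (Fin N) := ⟨⟨0, hN⟩⟩
    (Finset.Icc 1 N).inf' (Finset.nonempty_Icc.mpr hN) f =
      Finset.univ.inf' Finset.univ_nonempty (fun a : Fin N => f (a.val + 1)) := by
  haveI : Nonempty (Fin N) := ⟨⟨0, hN⟩⟩
  refine le_antisymm (Finset.le_inf' _ _ fun a _ => Finset.inf'_le _ ?_)
    (Finset.le_inf' _ _ fun j hj => ?_)
  · exact Finset.mem_Icc.mpr ⟨by omega, by have := a.isLt; omega⟩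
  · have hj' := Finset.mem_Icc.mp hj
    have he : j = (⟨j - 1, by omega⟩ : Fin N).val + 1 := by simp; omega
    rw [he]
    exact Finset.inf'_le _ (Finset.mem_univ _)

lemma card_Icc_eq (hN : 0 < N) (p : ℕ → Prop) [DecidablePred p] :
    ((Finset.Icc 1 N).filter p).card
      = (Finset.univ.filter (fun a : Fin N => p (a.val + 1))).card := by
  refine Finset.card_bij' (fun j hj => (⟨j - 1, ?_⟩ : Fin N)) (fun a _ => a.val + 1) ?_ ?_ ?_ ?_
  · have := (Finset.mem_Icc.mp (Finset.mem_filter.mp hj).1)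
    omega
  · intro j hj
    simp only [Finset.mem_filter, Finset.mem_Icc] at hj
    simp only [Finset.mem_filter, Finset.mem_univ, true_and]
    have he : j - 1 + 1 = j := by omega
    rw [he]
    exact hj.2
  · intro a ha
    simp only [Finset.mem_filter, Finset.mem_univ, true_and] at ha
    simp only [Finset.mem_filter, Finset.mem_Icc]
    exact ⟨⟨by omega, by have := a.isLt; omega⟩, ha⟩
  · intro j hj
    have := (Finset.mem_Icc.mp (Finset.mem_filter.mp hj).1)
    simp only
    omega
  · intro a ha
    ext
    simp

open scoped Classical in
lemma count_path (hN : 0 < N) (x : Fin N → ℝ) (h0 : psum N x N = 0) (i : ℕ) :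
    (Finset.univ.filter fun k : Fin N =>
        (∀ j ∈ Finset.Icc 1 N, 0 ≤ psum N (shift k x) j) ∧
        ((Finset.Icc 1 N).filter (fun j => psum N (shift k x) j =
          (Finset.Icc 1 N).inf' (Finset.nonempty_Icc.mpr hN)
            (fun m => psum N (shift k x) m))).card = i).card ≤ i := by
  haveI : NeZero N := ⟨hN.ne'⟩
  haveI : Nonempty (Fin N) := ⟨⟨0, hN⟩⟩
  have h0' : vsum hN x N = 0 := by rw [← psum_eq_vsum hN x le_rfl]; exact h0
  have hpv : ∀ (k : Fin N) (a : Fin N),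
      psum N (shift k x) (a.val + 1) = gfun hN (shift k x) a := by
    intro k a
    exact psum_eq_vsum hN (shift k x) (by have := a.isLt; omega)
  have hinf : ∀ k : Fin N,
      (Finset.Icc 1 N).inf' (Finset.nonempty_Icc.mpr hN) (fun m => psum N (shift k x) m)
        = Mval hN (shift k x) := by
    intro k
    rw [inf_Icc_eq hN]
    exact Finset.inf'_congr _ rfl (fun a _ => hpv k a)
  have hfilter : (Finset.univ.filter fun k : Fin N =>
        (∀ j ∈ Finset.Icc 1 N, 0 ≤ psum N (shift k x) j) ∧
        ((Finset.Icc 1 N).filter (fun j => psum N (shift k x) j =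
          (Finset.Icc 1 N).inf' (Finset.nonempty_Icc.mpr hN)
            (fun m => psum N (shift k x) m))).card = i)
      = (Finset.univ.filter fun k : Fin N =>
          (∀ a, 0 ≤ gfun hN (shift k x) a) ∧
          (Finset.univ.filter fun a => gfun hN (shift k x) a = Mval hN (shift k x)).card = i) := by
    ext k
    simp only [Finset.mem_filter, Finset.mem_univ, true_and]
    have e1 : (∀ j ∈ Finset.Icc 1 N, 0 ≤ psum N (shift k x) j)
        ↔ ∀ a, 0 ≤ gfun hN (shift k x) a := by
      rw [forall_Icc_iff hN]
      exact forall_congr' fun a => by rw [hpv k a]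
    have e2 : ((Finset.Icc 1 N).filter (fun j => psum N (shift k x) j =
          (Finset.Icc 1 N).inf' (Finset.nonempty_Icc.mpr hN)
            (fun m => psum N (shift k x) m))).card
        = (Finset.univ.filter fun a => gfun hN (shift k x) a = Mval hN (shift k x)).card := by
      rw [card_Icc_eq hN]
      congr 1
      refine Finset.filter_congr fun a _ => ?_
      rw [hpv k a, hinf k]
    rw [e1, e2]
  rw [hfilter]
  exact count_main hN x h0' i

end CyclicAux

namespace CyclicAux

open MeasureTheory ProbabilityTheory

variable {N : ℕ}

lemma measurable_psum (N j : ℕ) : Measurable fun x : Fin N → ℝ => psum N x j :=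
  Finset.measurable_sum _ fun i _ => measurable_pi_apply i

lemma measurable_shift (k : Fin N) : Measurable (shift k : (Fin N → ℝ) → (Fin N → ℝ)) :=
  measurable_pi_lambda _ fun a => measurable_pi_apply _

lemma measurable_inf'_finset {α : Type*} [MeasurableSpace α] {ι : Type*} (s : Finset ι)
    (hs : s.Nonempty) (f : ι → α → ℝ) (hf : ∀ i, Measurable (f i)) :
    Measurable fun x => s.inf' hs fun i => f i x := by
  induction hs using Finset.Nonempty.cons_induction with
  | singleton a => exact hf a
  | cons a s ha hs ih =>
      have : (fun x => (Finset.cons a s ha).inf' (Finset.cons_nonempty ha) fun i => f i x)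
          = fun x => f a x ⊓ s.inf' hs fun i => f i x := by
        funext x
        exact Finset.inf'_cons (H := hs) (f := fun i => f i x)
      rw [this]
      exact (hf a).inf ih

def Aset (N : ℕ) : Set (Fin N → ℝ) := {x | ∀ j ∈ Finset.Icc 1 N, 0 ≤ psum N x j}

open scoped Classical in
noncomputable def Zset (hN : 0 < N) (i : ℕ) : Set (Fin N → ℝ) :=
  {x | ((Finset.Icc 1 N).filter (fun j => psum N x j =
    (Finset.Icc 1 N).inf' (Finset.nonempty_Icc.mpr hN) (fun k => psum N x k))).card = i}

def Bset (N : ℕ) : Set (Fin N → ℝ) := {x | psum N x N = 0}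

lemma measurable_Bset (N : ℕ) : MeasurableSet (Bset N) :=
  measurableSet_eq_fun (measurable_psum N N) measurable_const

lemma measurable_Aset (N : ℕ) : MeasurableSet (Aset N) := by
  have : Aset N = ⋂ j ∈ Finset.Icc 1 N, {x | 0 ≤ psum N x j} := by
    ext x; simp [Aset]
  rw [this]
  exact MeasurableSet.biInter (Set.to_countable _)
    (fun j _ => measurableSet_le measurable_const (measurable_psum N j))

open scoped Classical in
lemma measurable_Zset (hN : 0 < N) (i : ℕ) : MeasurableSet (Zset hN i) := by
  have hinf : Measurable fun x : Fin N → ℝ =>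
      (Finset.Icc 1 N).inf' (Finset.nonempty_Icc.mpr hN) (fun k => psum N x k) :=
    measurable_inf'_finset _ _ _ (fun j => measurable_psum N j)
  have hcard : Measurable fun x : Fin N → ℝ =>
      (((Finset.Icc 1 N).filter (fun j => psum N x j =
        (Finset.Icc 1 N).inf' (Finset.nonempty_Icc.mpr hN) (fun k => psum N x k))).card : ℕ) := by
    have hrw : ∀ x : Fin N → ℝ,
        (((Finset.Icc 1 N).filter (fun j => psum N x j =
          (Finset.Icc 1 N).inf' (Finset.nonempty_Icc.mpr hN) (fun k => psum N x k))).card : ℕ)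
        = ∑ j ∈ Finset.Icc 1 N, if psum N x j =
            (Finset.Icc 1 N).inf' (Finset.nonempty_Icc.mpr hN) (fun k => psum N x k)
          then 1 else 0 := by
      intro x
      rw [Finset.sum_boole]
      simp
    simp only [hrw]
    refine Finset.measurable_sum _ fun j _ => Measurable.ite ?_ measurable_const measurable_const
    exact measurableSet_eq_fun (measurable_psum N j) hinf
  have : Zset hN i = (fun x : Fin N → ℝ =>
      ((Finset.Icc 1 N).filter (fun j => psum N x j =
        (Finset.Icc 1 N).inf' (Finset.nonempty_Icc.mpr hN) (fun k => psum N x k))).card) ⁻¹' {i} := by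
    ext x; simp [Zset]
  rw [this]
  exact hcard (measurableSet_singleton i)

end CyclicAux

namespace CyclicAux

open MeasureTheory ProbabilityTheory

variable {N : ℕ}

lemma map_shift_pi (hN : 0 < N) (μ : Measure ℝ) [IsProbabilityMeasure μ] (k : Fin N) :
    Measure.map (shift k) (Measure.pi fun _ : Fin N => μ) = Measure.pi fun _ : Fin N => μ := by
  haveI : NeZero N := ⟨hN.ne'⟩
  refine ((Measure.pi_eq (μ := fun _ : Fin N => μ) fun s hs => ?_).symm : _)
  rw [Measure.map_apply (measurable_shift k) (MeasurableSet.univ_pi hs)]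
  have hpre : (shift k : (Fin N → ℝ) → (Fin N → ℝ)) ⁻¹' Set.pi Set.univ s
      = Set.pi Set.univ (fun a => s (a - k)) := by
    ext x
    simp only [Set.mem_preimage, Set.mem_pi, Set.mem_univ, true_implies]
    constructor
    · intro h a
      have := h (a - k)
      rwa [shift, sub_add_cancel] at this
    · intro h j
      have := h (j + k)
      rwa [add_sub_cancel_right] at this
  rw [hpre, Measure.pi_pi]
  exact (Fintype.prod_equiv (Equiv.addRight k) (fun a => μ (s a))
    (fun a => μ (s (a - k))) (fun a => by simp)).symm

lemma map_joint_eq_pi {Ω : Type*} [MeasurableSpace Ω] (P : Measure Ω) [IsProbabilityMeasure P]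
    (X : Fin N → Ω → ℝ) (hmeas : ∀ i, Measurable (X i))
    (hindep : iIndepFun X P)
    (μ : Measure ℝ) [IsProbabilityMeasure μ] (hident : ∀ i, Measure.map (X i) P = μ) :
    Measure.map (fun ω a => X a ω) P = Measure.pi fun _ : Fin N => μ := by
  have hY : Measurable fun ω (a : Fin N) => X a ω := measurable_pi_lambda _ fun a => hmeas a
  refine ((Measure.pi_eq (μ := fun _ : Fin N => μ) fun s hs => ?_).symm : _)
  rw [Measure.map_apply hY (MeasurableSet.univ_pi hs)]
  have hpre : (fun ω (a : Fin N) => X a ω) ⁻¹' Set.pi Set.univ s = ⋂ a ∈ Finset.univ, X a ⁻¹' s a := by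
    ext ω
    simp [Set.mem_pi]
  rw [hpre, hindep.measure_inter_preimage_eq_mul Finset.univ (fun a _ => hs a)]
  refine Finset.prod_congr rfl fun a _ => ?_
  rw [← hident a, Measure.map_apply (hmeas a) (hs a)]

end CyclicAux

namespace CyclicAux

open MeasureTheory ProbabilityTheory
open scoped ENNReal

variable {N : ℕ}

lemma pointwise_bound (hN : 0 < N) (i : ℕ) (x : Fin N → ℝ) :
    ∑ k : Fin N, ((shift k ⁻¹' (Bset N ∩ (Aset N ∩ Zset hN i))).indicator
        (1 : (Fin N → ℝ) → ℝ≥0∞) x)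
      ≤ (i : ℝ≥0∞) * (Bset N).indicator 1 x := by
  classical
  by_cases hx : x ∈ Bset N
  · rw [Set.indicator_of_mem hx, Pi.one_apply, mul_one]
    have hterm : ∀ k : Fin N, ((shift k ⁻¹' (Bset N ∩ (Aset N ∩ Zset hN i))).indicator
        (1 : (Fin N → ℝ) → ℝ≥0∞) x)
        = if shift k x ∈ Bset N ∩ (Aset N ∩ Zset hN i) then 1 else 0 := by
      intro k
      rw [Set.indicator_apply]
      simp [Set.mem_preimage]
    rw [Finset.sum_congr rfl fun k _ => hterm k, Finset.sum_boole]
    have hcard : (Finset.univ.filter fun k : Fin N =>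
          shift k x ∈ Bset N ∩ (Aset N ∩ Zset hN i)).card ≤ i := by
      refine le_trans (Finset.card_le_card fun k hk => ?_) (count_path hN x hx i)
      simp only [Finset.mem_filter, Finset.mem_univ, true_and] at hk ⊢
      exact ⟨hk.2.1, hk.2.2⟩
    exact_mod_cast Nat.cast_le.mpr hcard
  · rw [Set.indicator_of_notMem hx, mul_zero]
    have : ∀ k : Fin N, ((shift k ⁻¹' (Bset N ∩ (Aset N ∩ Zset hN i))).indicator
        (1 : (Fin N → ℝ) → ℝ≥0∞) x) = 0 := by
      intro k
      refine Set.indicator_of_notMem (fun hmem => hx ?_) _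
      have := hmem.1
      have htot := total_shift hN x k
      unfold Bset at this ⊢
      simp only [Set.mem_setOf_eq] at this ⊢
      rw [← htot]
      exact this
    rw [Finset.sum_congr rfl fun k _ => this k]
    simp

lemma main_ineq (hN : 0 < N) (μ : Measure ℝ) [IsProbabilityMeasure μ] (i : ℕ) :
    (N : ℝ≥0∞) * (Measure.pi fun _ : Fin N => μ) (Bset N ∩ (Aset N ∩ Zset hN i))
      ≤ (i : ℝ≥0∞) * (Measure.pi fun _ : Fin N => μ) (Bset N) := by
  classical
  set ν := Measure.pi fun _ : Fin N => μ with hν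
  have hE : MeasurableSet (Bset N ∩ (Aset N ∩ Zset hN i)) :=
    (measurable_Bset N).inter ((measurable_Aset N).inter (measurable_Zset hN i))
  have hshift : ∀ k : Fin N, ν (shift k ⁻¹' (Bset N ∩ (Aset N ∩ Zset hN i)))
      = ν (Bset N ∩ (Aset N ∩ Zset hN i)) := by
    intro k
    rw [← Measure.map_apply (measurable_shift k) hE, hν, map_shift_pi hN μ k]
  calc (N : ℝ≥0∞) * ν (Bset N ∩ (Aset N ∩ Zset hN i))
      = ∑ _k : Fin N, ν (Bset N ∩ (Aset N ∩ Zset hN i)) := by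
        rw [Finset.sum_const, Finset.card_univ, Fintype.card_fin, nsmul_eq_mul]
    _ = ∑ k : Fin N, ν (shift k ⁻¹' (Bset N ∩ (Aset N ∩ Zset hN i))) := by
        exact (Finset.sum_congr rfl fun k _ => hshift k).symm
    _ = ∑ k : Fin N, ∫⁻ x, ((shift k ⁻¹' (Bset N ∩ (Aset N ∩ Zset hN i))).indicator 1 x) ∂ν := by
        refine Finset.sum_congr rfl fun k _ => ?_
        rw [lintegral_indicator_one (measurable_shift k hE)]
    _ = ∫⁻ x, ∑ k : Fin N, ((shift k ⁻¹' (Bset N ∩ (Aset N ∩ Zset hN i))).indicator 1 x) ∂ν := by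
        exact (lintegral_finset_sum _ fun k _ =>
          measurable_one.indicator (measurable_shift k hE)).symm
    _ ≤ ∫⁻ x, (i : ℝ≥0∞) * (Bset N).indicator 1 x ∂ν :=
        lintegral_mono fun x => pointwise_bound hN i x
    _ = (i : ℝ≥0∞) * ν (Bset N) := by
        rw [lintegral_const_mul _ (measurable_one.indicator (measurable_Bset N)),
          lintegral_indicator_one (measurable_Bset N)]

end CyclicAux

open MeasureTheory ProbabilityTheory CyclicAux
open scoped ENNReal


open MeasureTheory ProbabilityTheory

/-- **Cyclic shifting principle for bridges.** Let `S` be a random walk with i.i.d.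
increments taking values in a finite symmetric set, conditioned on `S N = 0`, and let
`Z i` be the event that the minimum of `S 1, ..., S N` is attained exactly `i` times.
Then `P(S j ≥ 0 for all 1 ≤ j ≤ N, and Z i | S N = 0) ≤ i / N`. -/
theorem cyclic_shift_bridge_bound
    {Ω : Type*} [MeasurableSpace Ω] (P : Measure Ω) [IsProbabilityMeasure P]
    (N : ℕ) (hN : 0 < N) (X : Fin N → Ω → ℝ)
    (hmeas : ∀ i, Measurable (X i))
    (hindep : iIndepFun X P)
    (hident : ∀ i, Measure.map (X i) P = Measure.map (X ⟨0, hN⟩) P)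
    (F : Finset ℝ) (hFsymm : ∀ x ∈ F, -x ∈ F)
    (hvals : ∀ i, ∀ᵐ ω ∂P, X i ω ∈ F)
    (S : ℕ → Ω → ℝ)
    (hS : ∀ j ω, S j ω = ∑ i ∈ Finset.univ.filter (fun i : Fin N => (i : ℕ) < j), X i ω)
    (hcond : P {ω | S N ω = 0} ≠ 0)
    (i : ℕ) (hi : 1 ≤ i) :
    (ProbabilityTheory.cond P {ω | S N ω = 0}
        ({ω | ∀ j ∈ Finset.Icc 1 N, 0 ≤ S j ω}
          ∩ {ω | ((Finset.Icc 1 N).filter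
              (fun j => S j ω = (Finset.Icc 1 N).inf' (Finset.nonempty_Icc.mpr hN) (fun k => S k ω))).card = i})).toReal
      ≤ (i : ℝ) / N := by
  classical
  haveI : NeZero N := ⟨hN.ne'⟩
  set μ := Measure.map (X ⟨0, hN⟩) P with hμ
  haveI : IsProbabilityMeasure μ := Measure.isProbabilityMeasure_map (hmeas _).aemeasurable
  set Y : Ω → Fin N → ℝ := fun ω a => X a ω with hYdef
  have hYm : Measurable Y := measurable_pi_lambda _ fun a => hmeas a
  have hmapY : Measure.map Y P = Measure.pi fun _ : Fin N => μ :=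
    map_joint_eq_pi P X hmeas hindep μ hident
  have hS' : ∀ j ω, S j ω = psum N (Y ω) j := fun j ω => hS j ω
  have hBset : {ω | S N ω = 0} = Y ⁻¹' Bset N := by
    ext ω
    simp only [Set.mem_setOf_eq, Set.mem_preimage, Bset, hS']
  have hAset : {ω | ∀ j ∈ Finset.Icc 1 N, 0 ≤ S j ω} = Y ⁻¹' Aset N := by
    ext ω
    simp only [Set.mem_setOf_eq, Set.mem_preimage, Aset, hS']
  have hZset : {ω | ((Finset.Icc 1 N).filter
        (fun j => S j ω = (Finset.Icc 1 N).inf' (Finset.nonempty_Icc.mpr hN)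
          (fun k => S k ω))).card = i} = Y ⁻¹' Zset hN i := by
    ext ω
    simp only [Set.mem_setOf_eq, Set.mem_preimage, Zset, hS']
  have hBmeas : MeasurableSet {ω | S N ω = 0} := by
    rw [hBset]; exact hYm (measurable_Bset N)
  rw [cond_apply hBmeas]
  -- rewrite everything in terms of preimages
  rw [hBset, hAset, hZset, ← Set.preimage_inter, ← Set.preimage_inter]
  have hE : MeasurableSet (Bset N ∩ (Aset N ∩ Zset hN i)) :=
    (measurable_Bset N).inter ((measurable_Aset N).inter (measurable_Zset hN i))
  have hPE : P (Y ⁻¹' (Bset N ∩ (Aset N ∩ Zset hN i)))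
      = (Measure.pi fun _ : Fin N => μ) (Bset N ∩ (Aset N ∩ Zset hN i)) := by
    rw [← hmapY, Measure.map_apply hYm hE]
  have hPB : P (Y ⁻¹' Bset N) = (Measure.pi fun _ : Fin N => μ) (Bset N) := by
    rw [← hmapY, Measure.map_apply hYm (measurable_Bset N)]
  have key : (N : ℝ≥0∞) * P (Y ⁻¹' (Bset N ∩ (Aset N ∩ Zset hN i)))
      ≤ (i : ℝ≥0∞) * P (Y ⁻¹' Bset N) := by
    rw [hPE, hPB]
    exact main_ineq hN μ i
  -- arithmetic
  set b := P (Y ⁻¹' Bset N) with hb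
  set m := P (Y ⁻¹' (Bset N ∩ (Aset N ∩ Zset hN i))) with hm
  have hble : m ≤ b := measure_mono (Set.preimage_mono Set.inter_subset_left)
  have hbne : b ≠ 0 := by rw [hb, ← hBset]; exact hcond
  have hbtop : b ≠ ∞ := (measure_lt_top P _).ne
  have hmtop : m ≠ ∞ := (measure_lt_top P _).ne
  have hNR : (0 : ℝ) < N := by exact_mod_cast hN
  have hbR : 0 < b.toReal := ENNReal.toReal_pos hbne hbtop
  have keyR : (N : ℝ) * m.toReal ≤ (i : ℝ) * b.toReal := by
    have h1 : ((N : ℝ≥0∞) * m).toReal ≤ ((i : ℝ≥0∞) * b).toReal :=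
      ENNReal.toReal_mono (by exact ENNReal.mul_ne_top (ENNReal.natCast_ne_top i) hbtop) key
    rwa [ENNReal.toReal_mul, ENNReal.toReal_mul, ENNReal.toReal_natCast,
      ENNReal.toReal_natCast] at h1
  have : (b⁻¹ * m).toReal = b.toReal⁻¹ * m.toReal := by
    rw [ENNReal.toReal_mul, ENNReal.toReal_inv]
  rw [this]
  have h2 : m.toReal ≤ (i : ℝ) * b.toReal / N := by
    rw [le_div_iff₀ hNR]
    nlinarith [keyR]
  calc b.toReal⁻¹ * m.toReal ≤ b.toReal⁻¹ * ((i : ℝ) * b.toReal / N) :=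
        mul_le_mul_of_nonneg_left h2 (by positivity)
    _ = (i : ℝ) / N := by field_simp
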